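/- Suppose a cost vector c on ℝ^{m+2n} assigns 0 to all x-arcs, cost 1 to the slack arcs s⁺_s and s⁻_t, and cost -M (with M > 3) to every other slack arc. Then among all circuits g of the pseudoflow polyhedron with entries in {-1,0,1} that do not decrease any slack variable (g⁺ ≥ 0 and g⁻ ≥ 0), the circuits with c^T g > 0 are exactly the path circuits of the form (H_{st}, e_s, e_t), i.e., signed s–t paths using slack arcs s⁺_s and s⁻_t, and each such circuit has c^T g = 2. -/

import Mathlib

def incidence {n m : ℕ} (tail head : Fin m → Fin n) : Matrix (Fin n) (Fin m) ℝ :=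
  fun i e => (if tail e = i then 1 else 0) - (if head e = i then 1 else 0)

def Fmat {n m : ℕ} (A : Matrix (Fin n) (Fin m) ℝ) :
    Matrix (Fin n) (Fin m ⊕ Fin n ⊕ Fin n) ℝ :=
  fun i => Sum.elim (fun e => A i e)
    (Sum.elim (fun j => if i = j then -1 else 0) (fun j => if i = j then 1 else 0))

def IsCircuitOf {n m : ℕ} (A : Matrix (Fin n) (Fin m) ℝ)
    (g : Fin m ⊕ Fin n ⊕ Fin n → ℤ) : Prop :=
  g ≠ 0 ∧
  (Fmat A).mulVec (fun v => (g v : ℝ)) = 0 ∧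
  Finset.univ.gcd (fun v => (g v).natAbs) = 1 ∧
  ∀ h : Fin m ⊕ Fin n ⊕ Fin n → ℝ, h ≠ 0 → (Fmat A).mulVec h = 0 →
    {v | h v ≠ 0} ⊆ {v | g v ≠ 0} → {v | g v ≠ 0} ⊆ {v | h v ≠ 0}

structure SimplePath (n m : ℕ) (tail head : Fin m → Fin n) (r : ℕ) where
  arc : Fin r → Fin m
  sign : Fin r → ℤ
  vert : Fin (r + 1) → Fin n
  arc_inj : Function.Injective arc
  vert_inj : Function.Injective vert
  step : ∀ k : Fin r,
    (sign k = 1 ∧ tail (arc k) = vert k.castSucc ∧ head (arc k) = vert k.succ) ∨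
    (sign k = -1 ∧ tail (arc k) = vert k.succ ∧ head (arc k) = vert k.castSucc)

def SimplePath.vec {n m r : ℕ} {tail head : Fin m → Fin n}
    (H : SimplePath n m tail head r) : Fin m → ℤ :=
  fun e => ∑ k : Fin r, if H.arc k = e then H.sign k else 0

lemma nodup_chain_of_reflTransGen {α : Type*} {r : α → α → Prop} {s t : α}
    (h : Relation.ReflTransGen r s t) :
    ∃ l : List α, l ≠ [] ∧ l.Chain' r ∧ l.Nodup ∧ l.head? = some s ∧ l.getLast? = some t := by
  induction h using Relation.ReflTransGen.head_induction_on with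
  | refl => exact ⟨[t], by simp [List.Chain', List.isChain_singleton]⟩
  | head hac _ ih =>
    rename_i a c _
    obtain ⟨l, hne, hch, hnd, hhd, hlast⟩ := ih
    by_cases ha : a ∈ l
    · obtain ⟨l₁, l₂, rfl⟩ := List.append_of_mem ha
      refine ⟨a :: l₂, by simp, hch.suffix ⟨l₁, rfl⟩, ?_, by simp, ?_⟩
      · exact (List.nodup_append'.mp hnd).2.1
      · rw [← hlast, List.getLast?_append,
          List.getLast?_eq_getLast (l := a :: l₂) (by simp)]
        rfl
    · refine ⟨a :: l, by simp, ?_, by simp [hnd, ha], by simp, ?_⟩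
      · rw [List.Chain', List.isChain_cons]
        refine ⟨fun y hy => ?_, hch⟩
        rw [hhd, Option.mem_some_iff] at hy; exact hy ▸ hac
      · rw [← hlast]
        cases l with
        | nil => simp at hne
        | cons x xs => simp [List.getLast?]

lemma path_of_chain {n m : ℕ} (tail head : Fin m → Fin n) (y : Fin m → ℤ) {s t : Fin n}
    {l : List (Fin n)} (hne : l ≠ [])
    (hch : l.Chain' (fun u v => ∃ e, (y e = 1 ∧ tail e = u ∧ head e = v) ∨
      (y e = -1 ∧ head e = u ∧ tail e = v)))
    (hnd : l.Nodup) (hhd : l.head? = some s) (hlast : l.getLast? = some t) (hst : s ≠ t) :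
    ∃ r : ℕ, 0 < r ∧ ∃ H : SimplePath n m tail head r, H.vert 0 = s ∧
      H.vert (Fin.last r) = t ∧ ∀ k, y (H.arc k) = H.sign k := by
  set r := l.length - 1 with hr
  have hlen : l.length = r + 1 := (Nat.succ_pred_eq_of_pos (List.length_pos_iff.mpr hne)).symm
  set vert : Fin (r + 1) → Fin n := fun k => l.get (Fin.cast hlen.symm k) with hv
  have vert_inj : Function.Injective vert := by
    intro a b hab
    have := List.nodup_iff_injective_get.mp hnd hab
    exact Fin.ext (by simpa [Fin.ext_iff] using this)
  have hv0 : vert 0 = s := by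
    cases l with
    | nil => exact absurd rfl hne
    | cons x xs => simp only [List.head?] at hhd; simp [hv]; exact (Option.some_inj.mp hhd)
  have hvlast : vert (Fin.last r) = t := by
    rw [List.getLast?_eq_getLast (l := l) hne] at hlast
    have := List.getLast_eq_getElem hne
    rw [this] at hlast
    simpa [hv, Fin.last, hr] using Option.some_inj.mp hlast
  have hstep : ∀ k : Fin r, ∃ e, (y e = 1 ∧ tail e = vert k.castSucc ∧ head e = vert k.succ) ∨
      (y e = -1 ∧ head e = vert k.castSucc ∧ tail e = vert k.succ) := by
    intro k
    have := List.isChain_iff_getElem.mp hch k (by omega)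
    convert this using 4 <;> simp [hv, Fin.ext_iff]
  have hrpos : 0 < r := by
    rcases Nat.eq_zero_or_pos r with h0 | h
    · exfalso; apply hst; rw [← hv0, ← hvlast]; congr 1; ext; simp [h0]
    · exact h
  refine ⟨r, hrpos, ?_⟩
  set arc : Fin r → Fin m := fun k => (hstep k).choose with harc
  set sign : Fin r → ℤ := fun k => y (arc k) with hsign
  have hspec : ∀ k : Fin r,
      (sign k = 1 ∧ tail (arc k) = vert k.castSucc ∧ head (arc k) = vert k.succ) ∨
      (sign k = -1 ∧ tail (arc k) = vert k.succ ∧ head (arc k) = vert k.castSucc) := by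
    intro k
    rcases (hstep k).choose_spec with ⟨h1, h2, h3⟩ | ⟨h1, h2, h3⟩
    · exact Or.inl ⟨by rw [hsign]; exact h1, h2, h3⟩
    · exact Or.inr ⟨by rw [hsign]; exact h1, h3, h2⟩
  have arc_inj : Function.Injective arc := by
    intro a b hab
    have hs : sign a = sign b := by rw [hsign]; simp only; rw [hab]
    rcases hspec a with ⟨s1, t1, h1⟩ | ⟨s1, t1, h1⟩ <;>
      rcases hspec b with ⟨s2, t2, h2⟩ | ⟨s2, t2, h2⟩
    · have : vert a.castSucc = vert b.castSucc := by rw [← t1, ← t2, hab]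
      exact Fin.castSucc_injective _ (vert_inj this)
    · rw [s1, s2] at hs; norm_num at hs
    · rw [s1, s2] at hs; norm_num at hs
    · have : vert a.succ = vert b.succ := by rw [← t1, ← t2, hab]
      exact Fin.succ_injective _ (vert_inj this)
  exact ⟨⟨arc, sign, vert, arc_inj, vert_inj, hspec⟩, hv0, hvlast, fun k => rfl⟩

lemma fin_telescope {r : ℕ} (f : Fin (r + 1) → ℝ) :
    ∑ k : Fin r, (f k.castSucc - f k.succ) = f 0 - f (Fin.last r) := by
  set F : ℕ → ℝ := fun j => if h : j < r + 1 then f ⟨j, h⟩ else 0 with hF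
  have h1 : ∑ k : Fin r, (f k.castSucc - f k.succ) = ∑ j ∈ Finset.range r, (F j - F (j + 1)) := by
    rw [Finset.sum_range fun j => F j - F (j+1)]
    apply Finset.sum_congr rfl
    intro k _
    have h1 : (k : ℕ) < r + 1 := by omega
    have h2 : (k : ℕ) + 1 < r + 1 := by omega
    simp only [hF, dif_pos h1, dif_pos h2]
    congr 1
  rw [h1, Finset.sum_range_sub' F r]
  simp only [hF, dif_pos (Nat.succ_pos r), dif_pos (Nat.lt_succ_self r)]
  congr 1

lemma path_incidence {n m r : ℕ} {tail head : Fin m → Fin n}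
    (H : SimplePath n m tail head r) (i : Fin n) :
    ∑ e, incidence tail head i e * (H.vec e : ℝ) =
      (if H.vert 0 = i then 1 else 0) - (if H.vert (Fin.last r) = i then 1 else 0) := by
  have key : ∀ e, incidence tail head i e * (H.vec e : ℝ) =
      ∑ k : Fin r, if H.arc k = e then incidence tail head i e * (H.sign k : ℝ) else 0 := by
    intro e
    rw [SimplePath.vec]
    push_cast
    rw [Finset.mul_sum]
    apply Finset.sum_congr rfl
    intro k _
    split <;> simp
  simp_rw [key]
  rw [Finset.sum_comm]
  have key2 : ∀ k : Fin r, (∑ e, if H.arc k = e then incidence tail head i e * (H.sign k : ℝ) else 0)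
      = (if H.vert k.castSucc = i then 1 else 0) - (if H.vert k.succ = i then 1 else 0) := by
    intro k
    rw [Finset.sum_ite_eq Finset.univ (H.arc k)
      (fun e => incidence tail head i e * (H.sign k : ℝ))]
    simp only [Finset.mem_univ, if_true]
    rcases H.step k with ⟨h1, h2, h3⟩ | ⟨h1, h2, h3⟩ <;>
      · rw [incidence, h1, h2, h3]; push_cast; ring
  simp_rw [key2]
  rw [fin_telescope (fun j => if H.vert j = i then 1 else 0)]

theorem improving_circuits_are_st_paths {n m : ℕ} (tail head : Fin m → Fin n)
    (s t : Fin n) (hst : s ≠ t) (M : ℝ) (hM : 3 < M)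
    (c : Fin m ⊕ Fin n ⊕ Fin n → ℝ)
    (hc : c = Sum.elim (fun _ => (0 : ℝ))
      (Sum.elim (fun i => -M + (1 + M) * (Pi.single s 1 : Fin n → ℝ) i)
        (fun i => -M + (1 + M) * (Pi.single t 1 : Fin n → ℝ) i)))
    (g : Fin m ⊕ Fin n ⊕ Fin n → ℤ)
    (hg : IsCircuitOf (incidence tail head) g)
    (hpm : ∀ v, g v = -1 ∨ g v = 0 ∨ g v = 1)
    (hgp : ∀ i, 0 ≤ g (Sum.inr (Sum.inl i)))
    (hgm : ∀ i, 0 ≤ g (Sum.inr (Sum.inr i))) :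
    (0 < ∑ v, c v * (g v : ℝ) ↔
      ∃ r : ℕ, 0 < r ∧ ∃ H : SimplePath n m tail head r,
        H.vert 0 = s ∧ H.vert (Fin.last r) = t ∧
        (∀ e, g (Sum.inl e) = H.vec e) ∧
        (∀ i, g (Sum.inr (Sum.inl i)) = (Pi.single s 1 : Fin n → ℤ) i) ∧
        (∀ i, g (Sum.inr (Sum.inr i)) = (Pi.single t 1 : Fin n → ℤ) i)) ∧
    (0 < ∑ v, c v * (g v : ℝ) → ∑ v, c v * (g v : ℝ) = 2) := by
  obtain ⟨hgne, hker, hgcd, hmin⟩ := hg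
  -- row equations of the kernel condition
  have hrow : ∀ i : Fin n, (∑ e, incidence tail head i e * (g (Sum.inl e) : ℝ))
      - (g (Sum.inr (Sum.inl i)) : ℝ) + (g (Sum.inr (Sum.inr i)) : ℝ) = 0 := by
    intro i
    have h0 := congrFun hker i
    simp only [Matrix.mulVec, dotProduct, Fintype.sum_sum_type, Fmat, Sum.elim_inl,
      Sum.elim_inr, Pi.zero_apply, ite_mul, one_mul, neg_mul, zero_mul, neg_zero,
      Finset.sum_ite_eq, Finset.mem_univ, if_true] at h0
    linarith
  have hcol : ∀ e, ∑ i, incidence tail head i e = 0 := by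
    intro e
    simp only [incidence, Finset.sum_sub_distrib, Finset.sum_ite_eq, Finset.mem_univ, if_true]
    ring
  have htot : (∑ i, (g (Sum.inr (Sum.inl i)) : ℝ)) = ∑ i, (g (Sum.inr (Sum.inr i)) : ℝ) := by
    have h1 : ∑ i, ((∑ e, incidence tail head i e * (g (Sum.inl e) : ℝ))
        - (g (Sum.inr (Sum.inl i)) : ℝ) + (g (Sum.inr (Sum.inr i)) : ℝ)) = 0 :=
      Finset.sum_eq_zero fun i _ => hrow i
    have h2 : ∑ i : Fin n, ∑ e, incidence tail head i e * (g (Sum.inl e) : ℝ) = 0 := by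
      rw [Finset.sum_comm]
      apply Finset.sum_eq_zero
      intro e _
      rw [← Finset.sum_mul, hcol e, zero_mul]
    rw [Finset.sum_add_distrib, Finset.sum_sub_distrib, h2] at h1
    linarith
  -- value of the cost
  have hcg : ∑ v, c v * (g v : ℝ) =
      -M * (∑ i, (g (Sum.inr (Sum.inl i)) : ℝ)) + (1 + M) * (g (Sum.inr (Sum.inl s)) : ℝ)
      + (-M * (∑ i, (g (Sum.inr (Sum.inr i)) : ℝ)) + (1 + M) * (g (Sum.inr (Sum.inr t)) : ℝ)) := by
    rw [hc]
    rw [Fintype.sum_sum_type, Fintype.sum_sum_type]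
    simp only [Sum.elim_inl, Sum.elim_inr, zero_mul, Finset.sum_const_zero, zero_add,
      Pi.single_apply]
    have e1 : ∀ i : Fin n, (-M + (1 + M) * if i = s then (1:ℝ) else 0) * (g (Sum.inr (Sum.inl i)) : ℝ)
        = -M * (g (Sum.inr (Sum.inl i)) : ℝ) + (if i = s then (1 + M) * (g (Sum.inr (Sum.inl i)) : ℝ) else 0) := by
      intro i; split <;> ring
    have e2 : ∀ i : Fin n, (-M + (1 + M) * if i = t then (1:ℝ) else 0) * (g (Sum.inr (Sum.inr i)) : ℝ)
        = -M * (g (Sum.inr (Sum.inr i)) : ℝ) + (if i = t then (1 + M) * (g (Sum.inr (Sum.inr i)) : ℝ) else 0) := by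
      intro i; split <;> ring
    simp_rw [e1, e2, Finset.sum_add_distrib, Finset.sum_ite_eq', Finset.mem_univ, if_true,
      ← Finset.mul_sum]
  have gpz : ∀ i, g (Sum.inr (Sum.inl i)) = 0 ∨ g (Sum.inr (Sum.inl i)) = 1 := by
    intro i; rcases hpm (Sum.inr (Sum.inl i)) with h | h | h <;> [skip; exact Or.inl h; exact Or.inr h]
    exact absurd (hgp i) (by omega)
  have gmz : ∀ i, g (Sum.inr (Sum.inr i)) = 0 ∨ g (Sum.inr (Sum.inr i)) = 1 := by
    intro i; rcases hpm (Sum.inr (Sum.inr i)) with h | h | h <;> [skip; exact Or.inl h; exact Or.inr h]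
    exact absurd (hgm i) (by omega)
  -- key1 : improving implies the slack structure
  have key1 : 0 < ∑ v, c v * (g v : ℝ) →
      (∀ i, g (Sum.inr (Sum.inl i)) = if i = s then 1 else 0) ∧
      (∀ i, g (Sum.inr (Sum.inr i)) = if i = t then 1 else 0) := by
    intro hpos
    set Zp : ℤ := ∑ i, g (Sum.inr (Sum.inl i)) with hZp
    set Zm : ℤ := ∑ i, g (Sum.inr (Sum.inr i)) with hZm
    have hZcast : ((Zp : ℝ)) = ∑ i, (g (Sum.inr (Sum.inl i)) : ℝ) := by push_cast [hZp]; rfl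
    have hZmcast : ((Zm : ℝ)) = ∑ i, (g (Sum.inr (Sum.inr i)) : ℝ) := by push_cast [hZm]; rfl
    have hZeq : Zp = Zm := by
      have := htot; rw [← hZcast, ← hZmcast] at this; exact_mod_cast this
    have hZpge : g (Sum.inr (Sum.inl s)) ≤ Zp :=
      Finset.single_le_sum (fun i _ => hgp i) (Finset.mem_univ s)
    have hZmge : g (Sum.inr (Sum.inr t)) ≤ Zm :=
      Finset.single_le_sum (fun i _ => hgm i) (Finset.mem_univ t)
    have hZnn : 0 ≤ Zp := Finset.sum_nonneg fun i _ => hgp i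
    have hcg2 : 0 < -M * (Zp : ℝ) + (1 + M) * (g (Sum.inr (Sum.inl s)) : ℝ)
        + (-M * (Zm : ℝ) + (1 + M) * (g (Sum.inr (Sum.inr t)) : ℝ)) := by
      rw [hZcast, hZmcast]; rw [hcg] at hpos; exact hpos
    have has : g (Sum.inr (Sum.inl s)) = 0 ∨ g (Sum.inr (Sum.inl s)) = 1 := gpz s
    have hbt : g (Sum.inr (Sum.inr t)) = 0 ∨ g (Sum.inr (Sum.inr t)) = 1 := gmz t
    have hZp1 : Zp = 1 := by
      rcases lt_trichotomy Zp 1 with h | h | h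
      · exfalso
        have hZ0 : Zp = 0 := by omega
        have ha0 : g (Sum.inr (Sum.inl s)) = 0 := by omega
        have hb0 : g (Sum.inr (Sum.inr t)) = 0 := by omega
        rw [hZ0, ← hZeq, hZ0, ha0, hb0] at hcg2
        norm_num at hcg2
      · exact h
      · exfalso
        have h2 : (2 : ℝ) ≤ (Zp : ℝ) := by exact_mod_cast (by omega : (2:ℤ) ≤ Zp)
        have ha1 : (g (Sum.inr (Sum.inl s)) : ℝ) ≤ 1 := by
          rcases has with h | h <;> rw [h] <;> norm_num
        have hb1 : (g (Sum.inr (Sum.inr t)) : ℝ) ≤ 1 := by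
          rcases hbt with h | h <;> rw [h] <;> norm_num
        rw [← hZeq] at hcg2
        nlinarith
    have ha1 : g (Sum.inr (Sum.inl s)) = 1 := by
      rcases has with h | h
      · exfalso
        have hb1 : (g (Sum.inr (Sum.inr t)) : ℝ) ≤ 1 := by
          rcases hbt with h' | h' <;> rw [h'] <;> norm_num
        rw [← hZeq, hZp1, h] at hcg2
        push_cast at hcg2
        nlinarith
      · exact h
    have hb1 : g (Sum.inr (Sum.inr t)) = 1 := by
      rcases hbt with h | h
      · exfalso
        rw [← hZeq, hZp1, h, ha1] at hcg2
        push_cast at hcg2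
        nlinarith
      · exact h
    constructor
    · intro i
      by_cases hi : i = s
      · rw [hi, if_pos rfl, ha1]
      · rw [if_neg hi]
        have hsum0 : ∑ j ∈ Finset.univ.erase s, g (Sum.inr (Sum.inl j)) = 0 := by
          have h2 := Finset.add_sum_erase Finset.univ (fun j => g (Sum.inr (Sum.inl j))) (Finset.mem_univ s)
          rw [← hZp] at h2
          omega
        have := (Finset.sum_eq_zero_iff_of_nonneg (fun j _ => hgp j)).mp hsum0 i
          (Finset.mem_erase.mpr ⟨hi, Finset.mem_univ i⟩)
        exact this
    · intro i
      by_cases hi : i = t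
      · rw [hi, if_pos rfl, hb1]
      · rw [if_neg hi]
        have hsum0 : ∑ j ∈ Finset.univ.erase t, g (Sum.inr (Sum.inr j)) = 0 := by
          have h2 := Finset.add_sum_erase Finset.univ (fun j => g (Sum.inr (Sum.inr j))) (Finset.mem_univ t)
          rw [← hZm] at h2
          have hZm1 : Zm = 1 := hZeq ▸ hZp1
          omega
        exact (Finset.sum_eq_zero_iff_of_nonneg (fun j _ => hgm j)).mp hsum0 i
          (Finset.mem_erase.mpr ⟨hi, Finset.mem_univ i⟩)
  -- key2 : the slack structure gives value 2
  have key2 : (∀ i, g (Sum.inr (Sum.inl i)) = if i = s then 1 else 0) →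
      (∀ i, g (Sum.inr (Sum.inr i)) = if i = t then 1 else 0) →
      ∑ v, c v * (g v : ℝ) = 2 := by
    intro hps hms
    rw [hcg]
    have e1 : ∑ i, (g (Sum.inr (Sum.inl i)) : ℝ) = 1 := by
      simp_rw [fun i => hps i]
      push_cast [apply_ite (Int.cast : ℤ → ℝ)]
      rw [Finset.sum_ite_eq' Finset.univ s (fun _ => (1:ℝ))]
      simp
    have e2 : ∑ i, (g (Sum.inr (Sum.inr i)) : ℝ) = 1 := by
      simp_rw [fun i => hms i]
      push_cast [apply_ite (Int.cast : ℤ → ℝ)]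
      rw [Finset.sum_ite_eq' Finset.univ t (fun _ => (1:ℝ))]
      simp
    rw [e1, e2, hps s, hms t, if_pos rfl, if_pos rfl]
    push_cast
    ring
  refine ⟨⟨?_, ?_⟩, fun hpos => key2 (key1 hpos).1 (key1 hpos).2⟩
  · -- forward direction
    intro hpos
    classical
    obtain ⟨hps, hms⟩ := key1 hpos
    have hrow2 : ∀ i, ∑ e, incidence tail head i e * (g (Sum.inl e) : ℝ)
        = (if i = s then 1 else 0) - (if i = t then 1 else 0) := by
      intro i
      have h := hrow i
      rw [hps i, hms i] at h
      push_cast [apply_ite (Int.cast : ℤ → ℝ)] at h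
      linarith
    set stp : Fin n → Fin n → Prop := fun u v => ∃ e,
      ((fun e => g (Sum.inl e)) e = 1 ∧ tail e = u ∧ head e = v) ∨
      ((fun e => g (Sum.inl e)) e = -1 ∧ head e = u ∧ tail e = v) with hstp
    have hreach : Relation.ReflTransGen stp s t := by
      by_contra hnr
      set Rf := Finset.univ.filter (fun v => Relation.ReflTransGen stp s v) with hRf
      have hsR : s ∈ Rf := Finset.mem_filter.mpr ⟨Finset.mem_univ s, Relation.ReflTransGen.refl⟩
      have htR : t ∉ Rf := by simp only [hRf, Finset.mem_filter, Finset.mem_univ, true_and]; exact hnr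
      have hsum1 : ∑ i ∈ Rf, ∑ e, incidence tail head i e * (g (Sum.inl e) : ℝ) = 1 := by
        simp_rw [hrow2]
        rw [Finset.sum_sub_distrib, Finset.sum_ite_eq' Rf s (fun _ => (1:ℝ)),
          Finset.sum_ite_eq' Rf t (fun _ => (1:ℝ)), if_pos hsR, if_neg htR]
        ring
      have hsum2 : ∑ i ∈ Rf, ∑ e, incidence tail head i e * (g (Sum.inl e) : ℝ) ≤ 0 := by
        rw [Finset.sum_comm]
        apply Finset.sum_nonpos
        intro e _
        rw [← Finset.sum_mul]
        have hAe : ∑ i ∈ Rf, incidence tail head i e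
            = (if tail e ∈ Rf then 1 else 0) - (if head e ∈ Rf then 1 else 0) := by
          simp only [incidence]
          rw [Finset.sum_sub_distrib, Finset.sum_ite_eq, Finset.sum_ite_eq]
        rw [hAe]
        have hmemR : ∀ v, v ∈ Rf ↔ Relation.ReflTransGen stp s v := by
          intro v; simp [hRf]
        rcases hpm (Sum.inl e) with h1 | h1 | h1
        · have himp : head e ∈ Rf → tail e ∈ Rf := by
            intro hh
            rw [hmemR] at hh ⊢
            exact hh.tail ⟨e, Or.inr ⟨h1, rfl, rfl⟩⟩
          rw [h1]
          push_cast
          split_ifs with p q q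
          · norm_num
          · norm_num
          · exact absurd (himp q) p
          · norm_num
        · rw [h1]; norm_num
        · have himp : tail e ∈ Rf → head e ∈ Rf := by
            intro hh
            rw [hmemR] at hh ⊢
            exact hh.tail ⟨e, Or.inl ⟨h1, rfl, rfl⟩⟩
          rw [h1]
          push_cast
          split_ifs with p q q
          · norm_num
          · exact absurd (himp p) q
          · norm_num
          · norm_num
      linarith
    obtain ⟨l, hlne, hlch, hlnd, hlhd, hllast⟩ := nodup_chain_of_reflTransGen hreach
    rw [hstp] at hlch
    obtain ⟨r, hrpos, H, h0v, hlv, hsign⟩ :=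
      path_of_chain tail head (fun e => g (Sum.inl e)) hlne hlch hlnd hlhd hllast hst
    have hvec_or : ∀ e, H.vec e = 0 ∨ H.vec e = g (Sum.inl e) := by
      intro e
      by_cases hk : ∃ k, H.arc k = e
      · obtain ⟨k, hk⟩ := hk
        right
        show (∑ j : Fin r, if H.arc j = e then H.sign j else 0) = _
        rw [Finset.sum_eq_single_of_mem k (Finset.mem_univ k)]
        · rw [if_pos hk, ← hsign k, hk]
        · intro j _ hj
          rw [if_neg]
          intro hje
          exact hj (H.arc_inj (hje.trans hk.symm))
      · left
        apply Finset.sum_eq_zero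
        intro k _
        rw [if_neg fun hh => hk ⟨k, hh⟩]
    set hv : Fin m ⊕ Fin n ⊕ Fin n → ℝ := Sum.elim (fun e => (H.vec e : ℝ))
      (Sum.elim (fun i => if i = s then 1 else 0) (fun i => if i = t then 1 else 0)) with hhv
    have hvne : hv ≠ 0 := by
      intro h0
      have := congrFun h0 (Sum.inr (Sum.inl s))
      simp [hhv] at this
    have hvker : (Fmat (incidence tail head)).mulVec hv = 0 := by
      funext i
      simp only [Matrix.mulVec, dotProduct, Fintype.sum_sum_type, Fmat, Sum.elim_inl,
        Sum.elim_inr, Pi.zero_apply, ite_mul, one_mul, neg_mul, zero_mul, neg_zero,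
        Finset.sum_ite_eq, Finset.mem_univ, if_true, hhv]
      rw [path_incidence H i, h0v, hlv,
        show ((if s = i then (1:ℝ) else 0)) = (if i = s then 1 else 0) by simp [eq_comm],
        show ((if t = i then (1:ℝ) else 0)) = (if i = t then 1 else 0) by simp [eq_comm]]
      ring
    have hsub : {v | hv v ≠ 0} ⊆ {v | g v ≠ 0} := by
      intro v hvv
      match v with
      | Sum.inl e =>
        simp only [hhv, Sum.elim_inl, Set.mem_setOf_eq, ne_eq, Int.cast_eq_zero] at hvv ⊢
        intro hge
        apply hvv
        rcases hvec_or e with h | h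
        · exact h
        · rw [h, hge]
      | Sum.inr (Sum.inl i) =>
        simp only [hhv, Sum.elim_inl, Sum.elim_inr, Set.mem_setOf_eq, ne_eq] at hvv ⊢
        have his : i = s := by by_contra hh; exact hvv (by rw [if_neg hh])
        rw [hps i, if_pos his]
        norm_num
      | Sum.inr (Sum.inr i) =>
        simp only [hhv, Sum.elim_inl, Sum.elim_inr, Set.mem_setOf_eq, ne_eq] at hvv ⊢
        have hit : i = t := by by_contra hh; exact hvv (by rw [if_neg hh])
        rw [hms i, if_pos hit]
        norm_num
    have hsup := hmin hv hvne hvker hsub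
    have harceq : ∀ e, g (Sum.inl e) = H.vec e := by
      intro e
      rcases hvec_or e with h | h
      · rw [h]
        by_contra hne2
        have hg0 : g (Sum.inl e) ≠ 0 := hne2
        have := hsup hg0
        simp only [hhv, Sum.elim_inl, Set.mem_setOf_eq, ne_eq, Int.cast_eq_zero] at this
        exact this h
      · rw [h]
    exact ⟨r, hrpos, H, h0v, hlv, harceq,
      fun i => by rw [Pi.single_apply]; exact hps i,
      fun i => by rw [Pi.single_apply]; exact hms i⟩
  · -- reverse direction
    rintro ⟨r, hrpos, H, h0v, hlv, harcs, hsp, hsm⟩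
    have hps : ∀ i, g (Sum.inr (Sum.inl i)) = if i = s then 1 else 0 := by
      intro i; rw [hsp i, Pi.single_apply]
    have hms : ∀ i, g (Sum.inr (Sum.inr i)) = if i = t then 1 else 0 := by
      intro i; rw [hsm i, Pi.single_apply]
    rw [key2 hps hms]
    norm_num
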